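/- Let k, n, σ², γ > 0 and t ≥ 0, and define φ : [0,∞) → ℝ by φ(λ) = (k/2)·log(nλ + σ²) + n t / (2(nλ + σ²)) + γλ. Then φ has a unique global minimizer over [0,∞), given by λ̂(γ) = max( 0 , (1/(4γ))·[ √(k² + 8γt) − (k + 4σ²γ/n) ] ); moreover λ̂(γ) = 0 if and only if t ≤ (σ²/n)(k + 2γσ²/n). -/

import Mathlib

set_option maxHeartbeats 1600000 in
/-- The per-block HGLasso hyperparameter objective
`φ(λ) = (k/2)log(nλ+σ²) + nt/(2(nλ+σ²)) + γλ` has the unique global minimizer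
`λ̂(γ) = max(0, (1/(4γ))[√(k²+8γt) − (k+4σ²γ/n)])` over `[0,∞)`, and `λ̂(γ) = 0` iff
`t ≤ (σ²/n)(k + 2γσ²/n)`. -/
theorem stmt_13 (k n σ2 γ : ℝ) (hk : 0 < k) (hn : 0 < n) (hσ2 : 0 < σ2) (hγ : 0 < γ)
    (t : ℝ) (ht : 0 ≤ t) (φ : ℝ → ℝ)
    (hφ : ∀ l, φ l = k / 2 * Real.log (n * l + σ2) + n * t / (2 * (n * l + σ2)) + γ * l)
    (lhat : ℝ)
    (hlhat : lhat = max 0 (1 / (4 * γ) * (Real.sqrt (k ^ 2 + 8 * γ * t) - (k + 4 * σ2 * γ / n)))) :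
    (∀ l, 0 ≤ l → φ lhat ≤ φ l) ∧
      (∀ l, 0 ≤ l → φ l = φ lhat → l = lhat) ∧
      (lhat = 0 ↔ t ≤ σ2 / n * (k + 2 * γ * σ2 / n)) := by
  have hn' : n ≠ 0 := hn.ne'
  set s : ℝ := Real.sqrt (k ^ 2 + 8 * γ * t) with hs_def
  have hs0 : 0 ≤ s := Real.sqrt_nonneg _
  have hs2 : s ^ 2 = k ^ 2 + 8 * γ * t := Real.sq_sqrt (by positivity)
  have hsk : k ≤ s := by
    by_contra hc
    push_neg at hc
    nlinarith [mul_nonneg hγ.le ht]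
  set ustar : ℝ := n * (s - k) / (4 * γ) with hustar_def
  have hustar0 : 0 ≤ ustar := by
    apply div_nonneg (mul_nonneg hn.le (sub_nonneg.2 hsk)) (by positivity)
  set u0 : ℝ := max σ2 ustar with hu0_def
  have hu0σ : σ2 ≤ u0 := le_max_left _ _
  have hu0star : ustar ≤ u0 := le_max_right _ _
  have hu0pos : 0 < u0 := lt_of_lt_of_le hσ2 hu0σ
  set F : ℝ → ℝ := fun u => k / 2 * Real.log u + n * t / (2 * u) + γ / n * u with hF
  have hφF : ∀ l, φ l = F (n * l + σ2) - γ * σ2 / n := by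
    intro l
    rw [hφ]
    simp only [hF]
    field_simp
    ring
  -- lhat corresponds to u0
  have hlu : n * lhat + σ2 = u0 := by
    rw [hlhat, hu0_def]
    rw [mul_max_of_nonneg _ _ hn.le, ← max_add_add_right]
    congr 1
    · ring
    · rw [hustar_def]; field_simp; ring
  have hlhat0 : 0 ≤ lhat := by rw [hlhat]; exact le_max_left _ _
  -- derivative of F
  have hderiv : ∀ u : ℝ, 0 < u →
      HasDerivAt F ((2 * γ * u ^ 2 + k * n * u - n ^ 2 * t) / (2 * n * u ^ 2)) u := by
    intro u hu
    have h1 : HasDerivAt (fun u : ℝ => k / 2 * Real.log u) (k / 2 * u⁻¹) u :=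
      (Real.hasDerivAt_log hu.ne').const_mul _
    have h2 : HasDerivAt (fun u : ℝ => n * t / (2 * u)) (n * t / 2 * (-(u ^ 2)⁻¹)) u := by
      have h2' : HasDerivAt (fun u : ℝ => n * t / 2 * u⁻¹) (n * t / 2 * (-(u ^ 2)⁻¹)) u :=
        (hasDerivAt_inv hu.ne').const_mul _
      convert h2' using 2 with x
      ring
    have h3 : HasDerivAt (fun u : ℝ => γ / n * u) (γ / n) u := by
      simpa using (hasDerivAt_id u).const_mul (γ / n)
    have := (h1.add h2).add h3
    refine this.congr_deriv ?_
    field_simp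
    ring
  have hcont : ContinuousOn F (Set.Ici σ2) := by
    intro u hu
    exact ((hderiv u (lt_of_lt_of_le hσ2 hu)).continuousAt).continuousWithinAt
  -- numerator sign facts
  have hqstar : 2 * γ * ustar ^ 2 + k * n * ustar - n ^ 2 * t = 0 := by
    rw [hustar_def]
    field_simp
    linear_combination (2 * n ^ 2) * hs2
  have hmono : StrictMonoOn F (Set.Ici u0) := by
    apply strictMonoOn_of_deriv_pos (convex_Ici _)
      (hcont.mono (Set.Ici_subset_Ici.2 hu0σ))
    intro u hu
    rw [interior_Ici] at hu
    have hupos : 0 < u := lt_trans hu0pos hu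
    rw [(hderiv u hupos).deriv]
    apply div_pos _ (by positivity)
    have hus : ustar < u := lt_of_le_of_lt hu0star hu
    nlinarith [hqstar, mul_pos (sub_pos.2 hus) (show (0:ℝ) < 2 * γ * (u + ustar) + k * n by positivity)]
  have hanti : StrictAntiOn F (Set.Icc σ2 u0) := by
    apply strictAntiOn_of_deriv_neg (convex_Icc _ _)
      (hcont.mono (fun x hx => hx.1))
    intro u hu
    rw [interior_Icc] at hu
    have hupos : 0 < u := lt_trans hσ2 hu.1
    rw [(hderiv u hupos).deriv]
    apply div_neg_of_neg_of_pos _ (by positivity)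
    have hus : u < ustar := by
      rcases lt_max_iff.1 hu.2 with h | h
      · exact absurd h (not_lt.2 hu.1.le)
      · exact h
    nlinarith [hqstar, mul_pos (sub_pos.2 hus) (show (0:ℝ) < 2 * γ * (u + ustar) + k * n by positivity)]
  -- key strict minimality in terms of F
  have hkey : ∀ u : ℝ, σ2 ≤ u → u ≠ u0 → F u0 < F u := by
    intro u hu hne
    rcases lt_or_gt_of_ne hne with h | h
    · exact hanti ⟨hu, h.le⟩ ⟨hu0σ, le_refl _⟩ h
    · exact hmono (Set.self_mem_Ici) (le_of_lt h) h
  clear_value s ustar u0 F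
  refine ⟨?_, ?_, ?_⟩
  · intro l hl
    rw [hφF, hφF, hlu]
    have hul : σ2 ≤ n * l + σ2 := by nlinarith
    rcases eq_or_ne (n * l + σ2) u0 with h | h
    · rw [h]
    · have hlt := hkey (n * l + σ2) hul h
      linarith
  · intro l hl hEq
    rw [hφF, hφF, hlu] at hEq
    have hul : σ2 ≤ n * l + σ2 := by nlinarith
    by_contra hne
    have h : n * l + σ2 ≠ u0 := by
      intro h
      apply hne
      have hnl : n * l = n * lhat := by linarith [hlu]
      exact mul_left_cancel₀ hn' hnl
    have hlt := hkey (n * l + σ2) hul h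
    linarith
  · have hrt : σ2 / n * (k + 2 * γ * σ2 / n) = σ2 * (k * n + 2 * γ * σ2) / n ^ 2 := by
      field_simp
    rw [hlhat, max_eq_left_iff, hrt, le_div_iff₀ (show (0:ℝ) < n ^ 2 by positivity)]
    have hcn : (k + 4 * σ2 * γ / n) * n = k * n + 4 * σ2 * γ := by field_simp
    constructor
    · intro h
      have hx : s - (k + 4 * σ2 * γ / n) ≤ 0 := by
        by_contra hc
        push_neg at hc
        have hpos : 0 < 1 / (4 * γ) * (s - (k + 4 * σ2 * γ / n)) :=
          mul_pos (by positivity) hc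
        linarith
      have h2 : s * n ≤ k * n + 4 * σ2 * γ := by
        have h2' := mul_le_mul_of_nonneg_right
          (show s ≤ k + 4 * σ2 * γ / n by linarith) hn.le
        linarith
      have h3 : (k ^ 2 + 8 * γ * t) * n ^ 2 ≤ (k * n + 4 * σ2 * γ) ^ 2 := by
        rw [← hs2]
        nlinarith [mul_nonneg hs0 hn.le]
      nlinarith [h3]
    · intro h
      have h5 : (k ^ 2 + 8 * γ * t) * n ^ 2 ≤ (k * n + 4 * σ2 * γ) ^ 2 := by
        nlinarith [mul_le_mul_of_nonneg_left h hγ.le]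
      have hsn : s ^ 2 * n ^ 2 = (k ^ 2 + 8 * γ * t) * n ^ 2 := by rw [hs2]
      have h6 : s * n ≤ k * n + 4 * σ2 * γ := by
        nlinarith [hsn, h5, mul_nonneg hs0 hn.le,
          (show (0:ℝ) < k * n + 4 * σ2 * γ by positivity)]
      have hsc : s ≤ k + 4 * σ2 * γ / n := by
        rw [show k + 4 * σ2 * γ / n = (k * n + 4 * σ2 * γ) / n by field_simp]
        rw [le_div_iff₀ hn]
        exact h6
      have hle : s - (k + 4 * σ2 * γ / n) ≤ 0 := by linarith
      exact mul_nonpos_iff.mpr (Or.inl ⟨by positivity, hle⟩)
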